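/- Let D be a division ring, x, y ∈ Dˣ, and (R, C) a solution of the non-commutative (2,2)-system with commutator C and initial data C = x y x⁻¹ y⁻¹, R₀ = y x y⁻¹, R₁ = y. Define the weights y₁ = y² x⁻¹ y⁻¹, y₂ = x⁻¹ y⁻¹, y₃ = x y⁻¹, and let T be the 4×4 matrix over D (rows and columns indexed by 0,1,2,3) with entries T_{0,1} = T_{1,2} = T_{2,3} = 1, T_{1,0} = y₁, T_{2,1} = y₂, T_{3,2} = y₃, and all other entries 0. Then for all n ≥ 0, R_n = (T^{2n})_{0,0} · R₀. Equivalently, R_n R₀⁻¹ is the partition function of paths of length 2n from vertex 0 to itself on the segment [0,3], with weight 1 per ascending step i → i+1, weight y_i per descending step i → i−1, and total weight the left-to-right ordered product of step weights. -/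

import Mathlib

open Matrix

/-- A solution of the non-commutative `(2,2)`-system with commutator `C`. -/
def IsTwoTwoSolution {D : Type*} [DivisionRing D] (R : ℤ → Dˣ) (C : Dˣ) : Prop :=
  (∀ n : ℤ, (C : D) =
      (((R (n + 1))⁻¹ : Dˣ) : D) * (R n : D) * (R (n + 1) : D) * (((R n)⁻¹ : Dˣ) : D)) ∧
  (∀ n : ℤ, (R (n + 1) : D) * (C : D) * (R (n - 1) : D) = (R n : D) ^ 2 + 1)

section TTAux

variable {D : Type*} [DivisionRing D]

/-- descending weight from vertex 1 -/
def ttW1 (x y : Dˣ) : D := (y : D) ^ 2 * ((x⁻¹ : Dˣ) : D) * ((y⁻¹ : Dˣ) : D)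
/-- descending weight from vertex 2 -/
def ttW2 (x y : Dˣ) : D := ((x⁻¹ : Dˣ) : D) * ((y⁻¹ : Dˣ) : D)
/-- descending weight from vertex 3 -/
def ttW3 (x y : Dˣ) : D := (x : D) * ((y⁻¹ : Dˣ) : D)

/-- first component: `(T^{2n})_{0,0}`; second: `(T^{2n})_{2,0}`. -/
def ttf (x y : Dˣ) : ℕ → D × D
  | 0 => (1, 0)
  | n + 1 =>
      (ttW1 x y * (ttf x y n).1 + (ttf x y n).2,
       ttW2 x y * ttW1 x y * (ttf x y n).1 + (ttW2 x y + ttW3 x y) * (ttf x y n).2)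

/-- the transfer matrix -/
def ttT (x y : Dˣ) : Matrix (Fin 4) (Fin 4) D :=
  !![0, 1, 0, 0;
     ttW1 x y, 0, 1, 0;
     0, ttW2 x y, 0, 1;
     0, 0, ttW3 x y, 0]

lemma ttT_sq (x y : Dˣ) :
    ttT x y ^ 2 =
      !![ttW1 x y, 0, 1, 0;
         0, ttW1 x y + ttW2 x y, 0, 1;
         ttW2 x y * ttW1 x y, 0, ttW2 x y + ttW3 x y, 0;
         0, ttW3 x y * ttW2 x y, 0, ttW3 x y] := by
  rw [pow_two]
  ext i j
  fin_cases i <;> fin_cases j <;>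
    simp [ttT, Matrix.mul_apply, Fin.sum_univ_four, Matrix.vecHead, Matrix.vecTail]

lemma ttT_pow_col (x y : Dˣ) (n : ℕ) :
    (ttT x y ^ (2 * n)) 0 0 = (ttf x y n).1 ∧
    (ttT x y ^ (2 * n)) 1 0 = 0 ∧
    (ttT x y ^ (2 * n)) 2 0 = (ttf x y n).2 ∧
    (ttT x y ^ (2 * n)) 3 0 = 0 := by
  induction n with
  | zero => simp [ttf, Matrix.one_apply]
  | succ n ih =>
      obtain ⟨h0, h1, h2, h3⟩ := ih
      have hp : ttT x y ^ (2 * (n + 1)) = ttT x y ^ 2 * ttT x y ^ (2 * n) := by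
        rw [← pow_add]; ring_nf
      rw [hp, ttT_sq]
      refine ⟨?_, ?_, ?_, ?_⟩ <;>
        simp [Matrix.mul_apply, Fin.sum_univ_four, h0, h1, h2, h3, ttf]

lemma ttf_linear (x y : Dˣ) (n : ℕ) :
    (ttf x y (n + 2)).1 =
      (ttW1 x y + ttW2 x y + ttW3 x y) * (ttf x y (n + 1)).1
        - (ttW3 x y * ttW1 x y) * (ttf x y n).1 := by
  show (ttW1 x y * (ttf x y (n+1)).1 + (ttf x y (n+1)).2) = _
  show (ttW1 x y * (ttW1 x y * (ttf x y n).1 + (ttf x y n).2)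
        + (ttW2 x y * ttW1 x y * (ttf x y n).1
            + (ttW2 x y + ttW3 x y) * (ttf x y n).2)) = _
  show _ = (ttW1 x y + ttW2 x y + ttW3 x y) * (ttW1 x y * (ttf x y n).1 + (ttf x y n).2)
        - (ttW3 x y * ttW1 x y) * (ttf x y n).1
  noncomm_ring

end TTAux

/-- Path model for the `(2,2)`-system: with initial data `C = x y x⁻¹ y⁻¹`, `R₀ = y x y⁻¹`,
`R₁ = y`, and transfer matrix `T` on the segment `[0,3]` with weight `1` per ascending step
and weights `y₁ = y² x⁻¹ y⁻¹`, `y₂ = x⁻¹ y⁻¹`, `y₃ = x y⁻¹` per descending step,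
one has `R_n = (T^{2n})_{0,0} · R₀` for all `n ≥ 0`. -/
theorem twotwo_path_model {D : Type*} [DivisionRing D] (x y : Dˣ) (R : ℤ → Dˣ) (C : Dˣ)
    (h : IsTwoTwoSolution R C)
    (hC : C = x * y * x⁻¹ * y⁻¹) (hR0 : R 0 = y * x * y⁻¹) (hR1 : R 1 = y) :
    ∀ n : ℕ,
      (R (n : ℤ) : D) =
        ((!![0, 1, 0, 0;
             (y : D) ^ 2 * ((x⁻¹ : Dˣ) : D) * ((y⁻¹ : Dˣ) : D), 0, 1, 0;
             0, ((x⁻¹ : Dˣ) : D) * ((y⁻¹ : Dˣ) : D), 0, 1;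
             0, 0, (x : D) * ((y⁻¹ : Dˣ) : D), 0] : Matrix (Fin 4) (Fin 4) D) ^ (2 * n)) 0 0 *
          (R 0 : D) := by
  -- notation
  set W1 := ttW1 x y with hW1
  set W2 := ttW2 x y with hW2
  set W3 := ttW3 x y with hW3
  set Ws : D := W1 + W2 + W3 with hWs
  -- unit word identities
  have hCR0u : C * R 0 = x := by rw [hC, hR0]; group
  have hCR0 : (C : D) * (R 0 : D) = (x : D) := by
    have := congrArg (Units.val) hCR0u; simpa using this
  have hw1R0u : (y ^ 2 * x⁻¹ * y⁻¹) * R 0 = y := by rw [hR0]; group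
  have hw1R0 : W1 * (R 0 : D) = (y : D) := by
    have := congrArg (Units.val) hw1R0u
    simpa [ttW1, hW1, Units.val_mul] using this
  have hw31u : (x * y⁻¹) * (y ^ 2 * x⁻¹ * y⁻¹) = C := by rw [hC]; group
  have hw31 : W3 * W1 = (C : D) := by
    have := congrArg (Units.val) hw31u
    simpa [ttW1, ttW3, hW1, hW3, Units.val_mul] using this
  -- the key linear recursion for R
  have key : ∀ m : ℕ, (R ((m : ℤ) + 2) : D) + (C : D) * (R (m : ℤ) : D)
      = Ws * (R ((m : ℤ) + 1) : D) := by
    intro m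
    induction m with
    | zero =>
        -- compute R 2
        have h21 := h.2 1
        norm_num at h21
        -- h21 : (R 2 : D) * C * R 0 = (R 1 : D)^2 + 1
        have hR2 : (R 2 : D) = ((y : D) ^ 2 + 1) * ((x⁻¹ : Dˣ) : D) := by
          have e1 : (R 2 : D) * (x : D) = (y : D) ^ 2 + 1 := by
            rw [← hCR0, ← mul_assoc, h21, hR1]
          have := congrArg (fun z => z * ((x⁻¹ : Dˣ) : D)) e1
          simpa [mul_assoc, Units.mul_inv_cancel_right] using this
        have e0 : ((0 : ℕ) : ℤ) = 0 := rfl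
        rw [e0]
        norm_num
        rw [hR2, hCR0, hR1]
        simp only [hWs, hW1, hW2, hW3, ttW1, ttW2, ttW3]
        have hyy : ((y⁻¹ : Dˣ) : D) * (y : D) = 1 := Units.inv_mul y
        rw [add_mul, add_mul, add_mul]
        rw [mul_assoc ((y : D) ^ 2 * ((x⁻¹ : Dˣ) : D)) _ (y : D),
            mul_assoc ((x⁻¹ : Dˣ) : D) _ (y : D),
            mul_assoc (x : D) _ (y : D), hyy]
        noncomm_ring
    | succ m ih =>
        -- index normalizations
        have i1 : ((m : ℤ) + 1) + 1 = (m : ℤ) + 2 := by ring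
        have i2 : ((m : ℤ) + 1) - 1 = (m : ℤ) := by ring
        have i3 : ((m : ℤ) + 2) + 1 = (m : ℤ) + 3 := by ring
        have i4 : ((m : ℤ) + 2) - 1 = (m : ℤ) + 1 := by ring
        set a : D := (R ((m : ℤ) + 1) : D) with ha
        set a' : D := (((R ((m : ℤ) + 1))⁻¹ : Dˣ) : D) with ha'
        set b : D := (R ((m : ℤ) + 2) : D) with hb
        set b' : D := (((R ((m : ℤ) + 2))⁻¹ : Dˣ) : D) with hb'
        set c : D := (R ((m : ℤ) + 3) : D) with hc
        set r0 : D := (R (m : ℤ) : D) with hr0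
        have hb'b : b' * b = 1 := Units.inv_mul _
        have hbb' : b * b' = 1 := Units.mul_inv _
        have ha'a : a' * a = 1 := Units.inv_mul _
        have haa' : a * a' = 1 := Units.mul_inv _
        -- relation (ii): c * b' * a = b + b'
        have h1b := h.1 ((m : ℤ) + 2)
        rw [i3] at h1b
        -- h1b : (C : D) = (R (m+3))⁻¹ * b * c * b'
        have h2b := h.2 ((m : ℤ) + 2)
        rw [i3, i4] at h2b
        -- h2b : c * C * a = b ^ 2 + 1
        have hii : c * b' * a = b + b' := by
          have e1 : b * (c * b' * a) = b ^ 2 + 1 := by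
            have := h2b
            rw [h1b] at this
            calc b * (c * b' * a)
                = (c * (((R ((m : ℤ) + 3))⁻¹ : Dˣ) : D)) * (b * (c * (b' * a))) := by
                  rw [Units.mul_inv]; noncomm_ring
              _ = c * ((((R ((m : ℤ) + 3))⁻¹ : Dˣ) : D) * b * c * b') * a := by
                  noncomm_ring
              _ = b ^ 2 + 1 := this
          have := congrArg (fun z => b' * z) e1
          try simp only [] at this
          calc c * b' * a = b' * (b * (c * b' * a)) := by
                rw [← mul_assoc, hb'b, one_mul]
            _ = b' * (b ^ 2 + 1) := by rw [e1]
            _ = b + b' := by rw [pow_two, mul_add, mul_one, ← mul_assoc, hb'b, one_mul]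
        -- relation (iii): C * a * b' = b' * a
        have h1a := h.1 ((m : ℤ) + 1)
        rw [i1] at h1a
        -- h1a : (C : D) = b' * a * b * a'
        have hiii : (C : D) * a * b' = b' * a := by
          rw [h1a]
          calc b' * a * b * a' * a * b' = b' * a * b * (a' * a) * b' := by noncomm_ring
            _ = b' * a * (b * b') := by rw [ha'a]; noncomm_ring
            _ = b' * a := by rw [hbb', mul_one]
        -- relation (iv)
        have h2a := h.2 ((m : ℤ) + 1)
        rw [i1, i2] at h2a
        -- h2a : b * C * r0 = a ^ 2 + 1
        -- the V identity
        have hV : (c + (C : D) * a) * b' * a = b + (C : D) * r0 := by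
          calc (c + (C : D) * a) * b' * a
              = c * b' * a + ((C : D) * a * b') * a := by noncomm_ring
            _ = (b + b') + (b' * a) * a := by rw [hii, hiii]
            _ = b + b' * (a ^ 2 + 1) := by rw [pow_two]; noncomm_ring
            _ = b + b' * (b * (C : D) * r0) := by rw [h2a]
            _ = b + (C : D) * r0 := by
                rw [← mul_assoc, ← mul_assoc, hb'b, one_mul]
        -- conclude the step
        have istep : ((m : ℤ) + 1) + 2 = (m : ℤ) + 3 := by ring
        have istep2 : ((m : ℤ) + 1) + 1 = (m : ℤ) + 2 := by ring
        push_cast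
        rw [istep, istep2]
        -- goal : c + C * a = Ws * b
        have e2 : (c + (C : D) * a) * b' * a = Ws * a := by rw [hV, ih]
        have := congrArg (fun z => z * a' * b) e2
        try simp only [] at this
        calc c + (C : D) * a
            = (c + (C : D) * a) * (b' * (a * a') * b) := by
              rw [haa', mul_one, hb'b, mul_one]
          _ = (c + (C : D) * a) * b' * a * a' * b := by noncomm_ring
          _ = Ws * a * a' * b := by rw [this]
          _ = Ws * b := by rw [mul_assoc Ws a a', haa', mul_one]
  -- R n = (ttf n).1 * R 0
  have main : ∀ n : ℕ, (R (n : ℤ) : D) = (ttf x y n).1 * (R 0 : D) ∧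
      (R ((n : ℤ) + 1) : D) = (ttf x y (n + 1)).1 * (R 0 : D) := by
    intro n
    induction n with
    | zero =>
        constructor
        · norm_num [ttf]
        · norm_num
          rw [hR1]
          show (y : D) = (W1 * 1 + 0) * (R 0 : D)
          rw [mul_one, add_zero, hw1R0]
    | succ n ih =>
        obtain ⟨ih1, ih2⟩ := ih
        constructor
        · push_cast
          exact ih2
        · push_cast
          have hk := key n
          have : (R ((n : ℤ) + 2) : D) = Ws * (R ((n : ℤ) + 1) : D)
              - (C : D) * (R (n : ℤ) : D) := by
            rw [← hk]; noncomm_ring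
          have e3 : ((n : ℤ) + 1) + 1 = (n : ℤ) + 2 := by ring
          rw [e3, this, ih1, ih2, ttf_linear x y n, ← hW1, ← hW2, ← hW3, ← hWs, hw31]
          noncomm_ring
  intro n
  have hT : (!![0, 1, 0, 0;
             (y : D) ^ 2 * ((x⁻¹ : Dˣ) : D) * ((y⁻¹ : Dˣ) : D), 0, 1, 0;
             0, ((x⁻¹ : Dˣ) : D) * ((y⁻¹ : Dˣ) : D), 0, 1;
             0, 0, (x : D) * ((y⁻¹ : Dˣ) : D), 0] : Matrix (Fin 4) (Fin 4) D) = ttT x y := rfl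
  rw [hT, (ttT_pow_col x y n).1]
  exact (main n).1
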